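/- Let p ≥ 5 and a, z ∈ ℂ. Then | |a+z|^{p+1} - |a|^{p+1} - (p+1)Re(āz)|a|^{p-1} - ((p+1)/2)|z|²|a|^{p-1} - ((p+1)(p-1)/2)(Re(āz))²|a|^{p-3} | ≤ C(1+|a|)^{p-2}|z|³ for |z| ≤ 1, with C depending only on p. -/

import Mathlib

open Set

lemma taylor2_abs_bound {f f' f'' f''' : ℝ → ℝ} {s : Set ℝ} (hs : Convex ℝ s)
    (hf : ∀ x, HasDerivAt f (f' x) x) (hf' : ∀ x, HasDerivAt f' (f'' x) x)
    (hf'' : ∀ x, HasDerivAt f'' (f''' x) x)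
    {M : ℝ} (hbound : ∀ x ∈ s, |f''' x| ≤ M)
    {x0 y : ℝ} (hx0 : x0 ∈ s) (hy : y ∈ s) :
    |f y - f x0 - f' x0 * (y - x0) - f'' x0 * (y - x0) ^ 2 / 2| ≤ M * |y - x0| ^ 3 := by
  -- Step A
  have hA : ∀ x ∈ s, |f'' x - f'' x0| ≤ M * |x - x0| := by
    intro x hx
    have := hs.norm_image_sub_le_of_norm_hasDerivWithin_le
      (f := f'') (f' := f''') (fun u hu => (hf'' u).hasDerivWithinAt)
      hbound hx0 hx
    simpa [Real.norm_eq_abs] using this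
  -- Step B
  set E1 : ℝ → ℝ := fun x => f' x - f' x0 - f'' x0 * (x - x0) with hE1def
  have hE1deriv : ∀ x, HasDerivAt E1 (f'' x - f'' x0) x := by
    intro x
    have h1 : HasDerivAt (fun x : ℝ => f'' x0 * (x - x0)) (f'' x0 * 1) x :=
      (((hasDerivAt_id x).sub_const x0)).const_mul (f'' x0)
    have := ((hf' x).sub_const (f' x0)).sub h1
    simp at this
    exact this
  have hB : ∀ x ∈ s, |E1 x| ≤ M * |x - x0| ^ 2 := by
    intro x hx
    have hsub : uIcc x0 x ⊆ s := hs.ordConnected.uIcc_subset hx0 hx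
    have := (convex_uIcc x0 x).norm_image_sub_le_of_norm_hasDerivWithin_le
      (f := E1) (f' := fun u => f'' u - f'' x0)
      (fun u _ => (hE1deriv u).hasDerivWithinAt)
      (C := M * |x - x0|)
      (fun u hu => by
        have h1 := hA u (hsub hu)
        have h2 : |u - x0| ≤ |x - x0| := abs_sub_left_of_mem_uIcc hu
        have hM0 : 0 ≤ M := le_trans (abs_nonneg _) (hbound x0 hx0)
        calc ‖f'' u - f'' x0‖ = |f'' u - f'' x0| := rfl
          _ ≤ M * |u - x0| := h1
          _ ≤ M * |x - x0| := by nlinarith [abs_nonneg (u - x0)])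
      left_mem_uIcc right_mem_uIcc
    have hE1x0 : E1 x0 = 0 := by simp [hE1def]
    rw [hE1x0, sub_zero, Real.norm_eq_abs, Real.norm_eq_abs] at this
    calc |E1 x| ≤ M * |x - x0| * |x - x0| := this
      _ = M * |x - x0| ^ 2 := by ring
  -- Step C
  set E : ℝ → ℝ := fun x => f x - f x0 - f' x0 * (x - x0) - f'' x0 * (x - x0) ^ 2 / 2 with hEdef
  have hEderiv : ∀ x, HasDerivAt E (E1 x) x := by
    intro x
    have h0 : HasDerivAt (fun x : ℝ => x - x0) 1 x := (hasDerivAt_id x).sub_const x0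
    have h1 : HasDerivAt (fun x : ℝ => f' x0 * (x - x0)) (f' x0 * 1) x := h0.const_mul _
    have h2 : HasDerivAt (fun x : ℝ => f'' x0 * (x - x0) ^ 2 / 2)
        (f'' x0 * ((2 : ℕ) * (x - x0) ^ (2 - 1) * 1) / 2) x := ((h0.pow 2).const_mul _).div_const 2
    have := (((hf x).sub_const (f x0)).sub h1).sub h2
    refine this.congr_deriv ?_
    simp [hE1def]
    ring
  have hsub : uIcc x0 y ⊆ s := hs.ordConnected.uIcc_subset hx0 hy
  have hC := (convex_uIcc x0 y).norm_image_sub_le_of_norm_hasDerivWithin_le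
      (f := E) (f' := E1) (fun u _ => (hEderiv u).hasDerivWithinAt)
      (C := M * |y - x0| ^ 2)
      (fun u hu => by
        have h1 := hB u (hsub hu)
        have h2 : |u - x0| ≤ |y - x0| := abs_sub_left_of_mem_uIcc hu
        have hM0 : 0 ≤ M := le_trans (abs_nonneg _) (hbound x0 hx0)
        calc ‖E1 u‖ = |E1 u| := rfl
          _ ≤ M * |u - x0| ^ 2 := h1
          _ ≤ M * |y - x0| ^ 2 := mul_le_mul_of_nonneg_left (pow_le_pow_left₀ (abs_nonneg _) h2 2) hM0)
      left_mem_uIcc right_mem_uIcc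
  have hEx0 : E x0 = 0 := by simp [hEdef]
  rw [hEx0, sub_zero, Real.norm_eq_abs, Real.norm_eq_abs] at hC
  calc |E y| ≤ M * |y - x0| ^ 2 * |y - x0| := hC
    _ = M * |y - x0| ^ 3 := by ring

open Complex

set_option maxHeartbeats 1000000 in
/-- second-order Taylor expansion of `|u|^{p+1}` around `a`: for `p ≥ 5`
there is `C > 0` such that for `|z| ≤ 1`,
`| |a+z|^{p+1} - |a|^{p+1} - (p+1)Re(āz)|a|^{p-1} - ((p+1)/2)|z|²|a|^{p-1}
  - ((p+1)(p-1)/2)(Re(āz))²|a|^{p-3} | ≤ C (1+|a|)^{p-2} |z|³`. -/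
theorem potential_taylor_second_order (p : ℝ) (hp : 5 ≤ p) :
    ∃ C > 0, ∀ a z : ℂ, ‖z‖ ≤ 1 →
      |‖a + z‖ ^ (p + 1) - ‖a‖ ^ (p + 1)
        - (p + 1) * ((starRingEnd ℂ) a * z).re * ‖a‖ ^ (p - 1)
        - ((p + 1) / 2) * ‖z‖ ^ 2 * ‖a‖ ^ (p - 1)
        - ((p + 1) * (p - 1) / 2) * (((starRingEnd ℂ) a * z).re) ^ 2 * ‖a‖ ^ (p - 3)|
      ≤ C * (1 + ‖a‖) ^ (p - 2) * ‖z‖ ^ 3 := by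
  have hc2 : (0:ℝ) < (p+1)/2 * ((p-1)/2) := by nlinarith
  have hc3 : (0:ℝ) < (p+1)/2 * ((p-1)/2) * ((p-3)/2) := by nlinarith
  refine ⟨8*((p+1)/2 * ((p-1)/2) * ((p-3)/2)) + 3*((p+1)/2 * ((p-1)/2)) + 1,
    by nlinarith, ?_⟩
  intro a z hz
  set r : ℝ := ((starRingEnd ℂ) a * z).re with hrdef
  have hna : (0:ℝ) ≤ ‖a‖ := norm_nonneg a
  have hnz : (0:ℝ) ≤ ‖z‖ := norm_nonneg z
  have h1na : (0:ℝ) < 1 + ‖a‖ := by linarith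
  -- square-power helper
  have sqpow : ∀ t : ℝ, 0 ≤ t → ∀ q : ℝ, (t^2 : ℝ) ^ q = t ^ (2*q) := by
    intro t ht q
    rw [← Real.rpow_natCast t 2, ← Real.rpow_mul ht]
    norm_num
  -- expansion of the squared norm
  have hsq : ‖a + z‖^2 = ‖a‖^2 + (2*r + ‖z‖^2) := by
    rw [Complex.sq_norm, Complex.sq_norm, Complex.sq_norm, Complex.normSq_add, hrdef]
    simp [Complex.mul_re, Complex.conj_re, Complex.conj_im]
    ring
  -- derivatives
  have hg : ∀ x : ℝ, HasDerivAt (fun s : ℝ => s ^ ((p+1)/2))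
      ((p+1)/2 * x ^ ((p-1)/2)) x := by
    intro x
    have h := Real.hasDerivAt_rpow_const (x := x) (p := (p+1)/2) (Or.inr (by linarith))
    rwa [show (p+1)/2 - 1 = (p-1)/2 by ring] at h
  have hg' : ∀ x : ℝ, HasDerivAt (fun s : ℝ => (p+1)/2 * s ^ ((p-1)/2))
      ((p+1)/2 * ((p-1)/2) * x ^ ((p-3)/2)) x := by
    intro x
    have h := Real.hasDerivAt_rpow_const (x := x) (p := (p-1)/2) (Or.inr (by linarith))
    rw [show (p-1)/2 - 1 = (p-3)/2 by ring] at h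
    have h2 := h.const_mul ((p+1)/2)
    exact h2.congr_deriv (by ring)
  have hg'' : ∀ x : ℝ, HasDerivAt (fun s : ℝ => (p+1)/2 * ((p-1)/2) * s ^ ((p-3)/2))
      ((p+1)/2 * ((p-1)/2) * ((p-3)/2) * x ^ ((p-5)/2)) x := by
    intro x
    have h := Real.hasDerivAt_rpow_const (x := x) (p := (p-3)/2) (Or.inr (by linarith))
    rw [show (p-3)/2 - 1 = (p-5)/2 by ring] at h
    have h2 := h.const_mul ((p+1)/2 * ((p-1)/2))
    exact h2.congr_deriv (by ring)
  -- memberships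
  have haz : ‖a + z‖ ≤ ‖a‖ + 1 := (norm_add_le a z).trans (by linarith)
  have hs0mem : ‖a‖^2 ∈ Set.Icc (0:ℝ) ((1+‖a‖)^2) := ⟨by positivity, by nlinarith⟩
  have hymem : ‖a+z‖^2 ∈ Set.Icc (0:ℝ) ((1+‖a‖)^2) :=
    ⟨by positivity, by nlinarith [norm_nonneg (a+z)]⟩
  -- third-derivative bound
  have hbound : ∀ x ∈ Set.Icc (0:ℝ) ((1+‖a‖)^2),
      |(p+1)/2 * ((p-1)/2) * ((p-3)/2) * x ^ ((p-5)/2)|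
        ≤ (p+1)/2 * ((p-1)/2) * ((p-3)/2) * (1+‖a‖) ^ (p-5) := by
    intro x hx
    rw [_root_.abs_of_nonneg (mul_nonneg hc3.le (Real.rpow_nonneg hx.1 _))]
    have h1 : x ^ ((p-5)/2) ≤ (1+‖a‖) ^ (p-5) := by
      have h2 : x ^ ((p-5)/2) ≤ ((1+‖a‖)^2) ^ ((p-5)/2) :=
        Real.rpow_le_rpow hx.1 hx.2 (by linarith)
      rwa [sqpow _ h1na.le, show 2*((p-5)/2) = p-5 by ring] at h2
    exact mul_le_mul_of_nonneg_left h1 hc3.le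
  -- Taylor bound
  have key := taylor2_abs_bound (convex_Icc (0:ℝ) ((1+‖a‖)^2)) hg hg' hg'' hbound hs0mem hymem
  have hy_x0 : ‖a+z‖^2 - ‖a‖^2 = 2*r + ‖z‖^2 := by rw [hsq]; ring
  rw [hy_x0] at key
  -- rewrite the rpow-of-square values
  have e1 : ((‖a+z‖^2 : ℝ)) ^ ((p+1)/2) = ‖a+z‖ ^ (p+1) := by
    rw [sqpow _ (norm_nonneg _), show 2*((p+1)/2) = p+1 by ring]
  have e2 : ((‖a‖^2 : ℝ)) ^ ((p+1)/2) = ‖a‖ ^ (p+1) := by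
    rw [sqpow _ hna, show 2*((p+1)/2) = p+1 by ring]
  have e3 : ((‖a‖^2 : ℝ)) ^ ((p-1)/2) = ‖a‖ ^ (p-1) := by
    rw [sqpow _ hna, show 2*((p-1)/2) = p-1 by ring]
  have e4 : ((‖a‖^2 : ℝ)) ^ ((p-3)/2) = ‖a‖ ^ (p-3) := by
    rw [sqpow _ hna, show 2*((p-3)/2) = p-3 by ring]
  have key2 : |‖a+z‖^(p+1) - ‖a‖^(p+1) - (p+1)/2 * ‖a‖^(p-1) * (2*r + ‖z‖^2)
      - (p+1)/2 * ((p-1)/2) * ‖a‖^(p-3) * (2*r + ‖z‖^2)^2 / 2|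
      ≤ (p+1)/2 * ((p-1)/2) * ((p-3)/2) * (1+‖a‖)^(p-5) * |2*r + ‖z‖^2|^3 := by
    simpa only [e1, e2, e3, e4] using key
  -- split target
  have hsplit : ‖a + z‖ ^ (p + 1) - ‖a‖ ^ (p + 1)
        - (p + 1) * r * ‖a‖ ^ (p - 1)
        - ((p + 1) / 2) * ‖z‖ ^ 2 * ‖a‖ ^ (p - 1)
        - ((p + 1) * (p - 1) / 2) * r ^ 2 * ‖a‖ ^ (p - 3)
      = (‖a+z‖^(p+1) - ‖a‖^(p+1) - (p+1)/2 * ‖a‖^(p-1) * (2*r + ‖z‖^2)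
        - (p+1)/2 * ((p-1)/2) * ‖a‖^(p-3) * (2*r + ‖z‖^2)^2 / 2)
        + ((p+1)/2 * ((p-1)/2) * ‖a‖^(p-3) / 2) * (4*r*‖z‖^2 + ‖z‖^4) := by
    ring
  -- bound |h|
  have hr : |r| ≤ ‖a‖ * ‖z‖ := by
    have h := Complex.abs_re_le_norm ((starRingEnd ℂ) a * z)
    rw [norm_mul, Complex.norm_conj] at h
    rw [hrdef]
    exact h
  have hh1 : |2*r + ‖z‖^2| ≤ 2*(1+‖a‖)*‖z‖ := by
    have h0 := abs_add_le (2*r) (‖z‖^2)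
    have h3 : |2*r| = 2 * |r| := by rw [abs_mul]; norm_num
    have h2 : |‖z‖^2| = ‖z‖^2 := _root_.abs_of_nonneg (by positivity)
    have h4 : ‖z‖^2 ≤ ‖z‖ := by nlinarith
    have h5 : 2*(1+‖a‖)*‖z‖ = 2*‖z‖ + 2*(‖a‖*‖z‖) := by ring
    linarith
  have hh3 : |2*r + ‖z‖^2|^3 ≤ 8*(1+‖a‖)^3*‖z‖^3 := by
    calc |2*r + ‖z‖^2|^3 ≤ (2*(1+‖a‖)*‖z‖)^3 := pow_le_pow_left₀ (abs_nonneg _) hh1 3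
      _ = 8*(1+‖a‖)^3*‖z‖^3 := by ring
  -- rpow algebra
  have hP : (1+‖a‖)^(p-5) * (1+‖a‖)^3 = (1+‖a‖)^(p-2) := by
    rw [← Real.rpow_natCast (1+‖a‖) 3, ← Real.rpow_add h1na]
    congr 1
    push_cast
    ring
  have hQ : (1+‖a‖)^(p-3) * (1+‖a‖) = (1+‖a‖)^(p-2) := by
    rw [← Real.rpow_add_one (ne_of_gt h1na), show p-3+1 = p-2 by ring]
  have hA3 : ‖a‖^(p-3) ≤ (1+‖a‖)^(p-3) :=
    Real.rpow_le_rpow hna (by linarith) (by linarith)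
  have hA3' : ‖a‖^(p-3) * ‖a‖ ≤ (1+‖a‖)^(p-2) := by
    calc ‖a‖^(p-3) * ‖a‖ ≤ (1+‖a‖)^(p-3) * (1+‖a‖) :=
          mul_le_mul hA3 (by linarith) hna (Real.rpow_nonneg h1na.le _)
      _ = (1+‖a‖)^(p-2) := hQ
  have hA3'' : ‖a‖^(p-3) ≤ (1+‖a‖)^(p-2) := by
    calc ‖a‖^(p-3) ≤ (1+‖a‖)^(p-3) := hA3
      _ ≤ (1+‖a‖)^(p-2) := Real.rpow_le_rpow_of_exponent_le (by linarith) (by linarith)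
  -- remainder bound
  have hRb : (p+1)/2 * ((p-1)/2) * ((p-3)/2) * (1+‖a‖)^(p-5) * |2*r + ‖z‖^2|^3
      ≤ 8*((p+1)/2 * ((p-1)/2) * ((p-3)/2)) * ((1+‖a‖)^(p-2) * ‖z‖^3) := by
    have hM0 : (0:ℝ) ≤ (p+1)/2 * ((p-1)/2) * ((p-3)/2) * (1+‖a‖)^(p-5) :=
      mul_nonneg hc3.le (Real.rpow_nonneg h1na.le _)
    calc (p+1)/2 * ((p-1)/2) * ((p-3)/2) * (1+‖a‖)^(p-5) * |2*r + ‖z‖^2|^3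
        ≤ (p+1)/2 * ((p-1)/2) * ((p-3)/2) * (1+‖a‖)^(p-5) * (8*(1+‖a‖)^3*‖z‖^3) :=
          mul_le_mul_of_nonneg_left hh3 hM0
      _ = 8*((p+1)/2 * ((p-1)/2) * ((p-3)/2)) * (((1+‖a‖)^(p-5) * (1+‖a‖)^3) * ‖z‖^3) := by
          ring
      _ = 8*((p+1)/2 * ((p-1)/2) * ((p-3)/2)) * ((1+‖a‖)^(p-2) * ‖z‖^3) := by rw [hP]
  -- extra-term bound
  have hz4 : ‖z‖^4 ≤ ‖z‖^3 := pow_le_pow_of_le_one hnz hz (by norm_num)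
  have hXraw : |4*r*‖z‖^2 + ‖z‖^4| ≤ 4*‖a‖*‖z‖^3 + ‖z‖^3 := by
    have h0 := abs_add_le (4*r*‖z‖^2) (‖z‖^4)
    have h1 : |4*r*‖z‖^2| = 4 * |r| * ‖z‖^2 := by
      rw [abs_mul, abs_mul]
      norm_num [_root_.abs_of_nonneg (sq_nonneg ‖z‖)]
    have h2 : |‖z‖^4| = ‖z‖^4 := _root_.abs_of_nonneg (by positivity)
    have h5 := mul_le_mul_of_nonneg_right hr (sq_nonneg ‖z‖)
    have h6 : ‖a‖*‖z‖*‖z‖^2 = ‖a‖*‖z‖^3 := by ring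
    linarith
  have hXb : |((p+1)/2 * ((p-1)/2) * ‖a‖^(p-3) / 2) * (4*r*‖z‖^2 + ‖z‖^4)|
      ≤ 3*((p+1)/2 * ((p-1)/2)) * ((1+‖a‖)^(p-2) * ‖z‖^3) := by
    rw [abs_mul, _root_.abs_of_nonneg (by
      exact div_nonneg (mul_nonneg hc2.le (Real.rpow_nonneg hna _)) (by norm_num))]
    have hA30 : (0:ℝ) ≤ ‖a‖^(p-3) := Real.rpow_nonneg hna _
    have f1 := mul_le_mul_of_nonneg_right hA3' (pow_nonneg hnz 3)
    have f2 := mul_le_mul_of_nonneg_right hA3'' (pow_nonneg hnz 3)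
    have hmid : ‖a‖^(p-3)/2 * (4*‖a‖*‖z‖^3 + ‖z‖^3) ≤ 3*((1+‖a‖)^(p-2)*‖z‖^3) := by
      nlinarith [f1, f2, mul_nonneg (Real.rpow_nonneg h1na.le (p-2)) (pow_nonneg hnz 3)]
    calc ((p+1)/2 * ((p-1)/2) * ‖a‖^(p-3) / 2) * |4*r*‖z‖^2 + ‖z‖^4|
        ≤ ((p+1)/2 * ((p-1)/2) * ‖a‖^(p-3) / 2) * (4*‖a‖*‖z‖^3 + ‖z‖^3) :=
          mul_le_mul_of_nonneg_left hXraw (by positivity)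
      _ = ((p+1)/2 * ((p-1)/2)) * (‖a‖^(p-3)/2 * (4*‖a‖*‖z‖^3 + ‖z‖^3)) := by ring
      _ ≤ ((p+1)/2 * ((p-1)/2)) * (3*((1+‖a‖)^(p-2)*‖z‖^3)) :=
          mul_le_mul_of_nonneg_left hmid hc2.le
      _ = 3*((p+1)/2 * ((p-1)/2)) * ((1+‖a‖)^(p-2) * ‖z‖^3) := by ring
  -- final assembly
  calc |‖a + z‖ ^ (p + 1) - ‖a‖ ^ (p + 1)
        - (p + 1) * r * ‖a‖ ^ (p - 1)
        - ((p + 1) / 2) * ‖z‖ ^ 2 * ‖a‖ ^ (p - 1)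
        - ((p + 1) * (p - 1) / 2) * r ^ 2 * ‖a‖ ^ (p - 3)|
      ≤ |‖a+z‖^(p+1) - ‖a‖^(p+1) - (p+1)/2 * ‖a‖^(p-1) * (2*r + ‖z‖^2)
        - (p+1)/2 * ((p-1)/2) * ‖a‖^(p-3) * (2*r + ‖z‖^2)^2 / 2|
        + |((p+1)/2 * ((p-1)/2) * ‖a‖^(p-3) / 2) * (4*r*‖z‖^2 + ‖z‖^4)| := by
        rw [hsplit]; exact abs_add_le _ _
    _ ≤ 8*((p+1)/2 * ((p-1)/2) * ((p-3)/2)) * ((1+‖a‖)^(p-2) * ‖z‖^3)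
        + 3*((p+1)/2 * ((p-1)/2)) * ((1+‖a‖)^(p-2) * ‖z‖^3) := by
        have := key2.trans hRb
        linarith [hXb]
    _ ≤ (8*((p+1)/2 * ((p-1)/2) * ((p-3)/2)) + 3*((p+1)/2 * ((p-1)/2)) + 1)
        * (1 + ‖a‖) ^ (p - 2) * ‖z‖ ^ 3 := by
        have hPZ : (0:ℝ) ≤ (1+‖a‖)^(p-2) * ‖z‖^3 :=
          mul_nonneg (Real.rpow_nonneg h1na.le _) (pow_nonneg hnz 3)
        nlinarith [hPZ, hc2, hc3]
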